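/- arXiv:1201.1835 — 6 statements merged into one kernel-verified Lean document; each statement's English description precedes it below -/
import Mathlib

section
/- For every real number R with 0 < R < 1, there exists a unique real number G in the open interval (0,1) satisfying G = 1 - exp(-G/R). (This unique solution is denoted Ḡ(R).) -/
/-- Key uniqueness fact: two distinct positive fixed points are impossible,
by strict convexity of `exp`. -/
lemma stmt_0_key (R : ℝ) (hR0 : 0 < R) (a b : ℝ) (ha : 0 < a) (hab : a < b)
    (hfa : a = 1 - Real.exp (-a / R)) (hfb : b = 1 - Real.exp (-b / R)) : False := by
  have hb : 0 < b := ha.trans hab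
  set t : ℝ := a / b with ht_def
  have ht : 0 < t := div_pos ha hb
  have ht1 : t < 1 := (div_lt_one hb).2 hab
  have hne : (-b / R) ≠ (0 : ℝ) := by
    have : 0 < b / R := div_pos hb hR0
    intro h
    rw [neg_div] at h
    linarith [neg_eq_zero.mp h]
  have hconv := strictConvexOn_exp.2 (Set.mem_univ (-b / R)) (Set.mem_univ (0 : ℝ))
    hne ht (by linarith : (0:ℝ) < 1 - t) (by ring)
  have hsum : t • (-b / R) + (1 - t) • (0 : ℝ) = -a / R := by
    simp only [smul_eq_mul, mul_zero, add_zero, ht_def]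
    field_simp
  rw [hsum] at hconv
  simp only [smul_eq_mul, Real.exp_zero, mul_one] at hconv
  -- exp (-a/R) < t * exp (-b/R) + (1 - t)
  have hEb : Real.exp (-b / R) = 1 - b := by linarith
  have hEa : Real.exp (-a / R) = 1 - a := by linarith
  rw [hEa, hEb] at hconv
  have htb : t * b = a := by rw [ht_def]; field_simp
  nlinarith [hconv]

/-- For every real `R` with `0 < R < 1`, there exists a unique `G ∈ (0,1)`
satisfying `G = 1 - exp (-G/R)`. -/
theorem stmt_0 (R : ℝ) (hR0 : 0 < R) (hR1 : R < 1) :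
    ∃! G : ℝ, G ∈ Set.Ioo (0 : ℝ) 1 ∧ G = 1 - Real.exp (-G / R) := by
  set f : ℝ → ℝ := fun x => 1 - Real.exp (-x / R) - x with hf_def
  have hcont : Continuous f := by
    fun_prop
  set x₀ : ℝ := (1 - R) / 2 with hx0_def
  have hx0pos : 0 < x₀ := by simp [hx0_def]; linarith
  have hx0lt1 : x₀ < 1 := by simp [hx0_def]; linarith
  -- f x₀ > 0
  have hfx0 : 0 < f x₀ := by
    have hE : x₀ / R + 1 < Real.exp (x₀ / R) :=
      Real.add_one_lt_exp (by positivity)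
    have hEe : Real.exp (x₀ / R) * Real.exp (-x₀ / R) = 1 := by
      rw [← Real.exp_add, neg_div]; simp
    have hepos : 0 < Real.exp (-x₀ / R) := Real.exp_pos _
    have hkey : Real.exp (-x₀ / R) < 1 - x₀ := by
      by_contra h
      push_neg at h
      have h1 : (1 - x₀) * Real.exp (x₀ / R) ≤ 1 := by
        nlinarith [Real.exp_pos (x₀ / R)]
      have hx0R : 0 < x₀ / R := by positivity
      have h2 : 1 - R - x₀ = (1 - R) / 2 := by rw [hx0_def]; ring
      have hxRR : x₀ / R * R = x₀ := div_mul_cancel₀ _ (ne_of_gt hR0)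
      nlinarith [mul_lt_mul_of_pos_left hE (by linarith : (0:ℝ) < 1 - x₀),
        mul_pos hx0R (by linarith : (0:ℝ) < 1 - R - x₀)]
    simp only [hf_def]
    linarith
  -- f 1 < 0
  have hf1 : f 1 < 0 := by
    simp only [hf_def]
    have := Real.exp_pos (-1 / R)
    linarith
  -- IVT
  have hIVT := intermediate_value_Ioo' (le_of_lt hx0lt1) hcont.continuousOn
  have h0mem : (0 : ℝ) ∈ Set.Ioo (f 1) (f x₀) := ⟨hf1, hfx0⟩
  obtain ⟨G, hGmem, hGval⟩ := hIVT h0mem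
  have hGfix : G = 1 - Real.exp (-G / R) := by
    have : f G = 0 := hGval
    simp only [hf_def] at this
    linarith
  have hG0 : 0 < G := hx0pos.trans hGmem.1
  have hG1 : G < 1 := hGmem.2
  refine ⟨G, ⟨⟨hG0, hG1⟩, hGfix⟩, ?_⟩
  rintro y ⟨⟨hy0, hy1⟩, hyfix⟩
  rcases lt_trichotomy y G with h | h | h
  · exact absurd (stmt_0_key R hR0 y G hy0 h hyfix hGfix) (by simp)
  · exact h
  · exact absurd (stmt_0_key R hR0 G y hG0 h hGfix hyfix) (by simp)
end

section
/- Let g : [0,1] → [0,1] be continuous, strictly increasing with g(0) = 0, and let f : [0,1] → [0,1] be continuous and nondecreasing. If f(g(q)) < q for every q ∈ (0,1], then ∫₀¹ f(p) dp + ∫₀¹ g(q) dq < 1. -/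
open Filter Set intervalIntegral MeasureTheory

/-- EXIT chart area argument: if `g : [0,1] → [0,1]` is continuous, strictly
increasing with `g 0 = 0`, `f : [0,1] → [0,1]` is continuous and nondecreasing,
and `f (g q) < q` for every `q ∈ (0,1]`, then `∫₀¹ f + ∫₀¹ g < 1`. -/
theorem stmt_5 (g f : ℝ → ℝ)
    (hgmaps : Set.MapsTo g (Set.Icc 0 1) (Set.Icc 0 1))
    (hgcont : ContinuousOn g (Set.Icc 0 1)) (hgmono : StrictMonoOn g (Set.Icc 0 1))
    (hg0 : g 0 = 0)
    (hfmaps : Set.MapsTo f (Set.Icc 0 1) (Set.Icc 0 1))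
    (hfcont : ContinuousOn f (Set.Icc 0 1)) (hfmono : MonotoneOn f (Set.Icc 0 1))
    (htunnel : ∀ x ∈ Set.Ioc (0 : ℝ) 1, f (g x) < x) :
    (∫ p in (0 : ℝ)..1, f p) + (∫ x in (0 : ℝ)..1, g x) < 1 := by
  have h01 : (0 : ℝ) ≤ 1 := zero_le_one
  -- continuous extensions of `f` and `g` to all of `ℝ`
  set F : ℝ → ℝ := IccExtend h01 ((Icc (0:ℝ) 1).restrict f) with hFdef
  set G : ℝ → ℝ := IccExtend h01 ((Icc (0:ℝ) 1).restrict g) with hGdef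
  have hFeq : ∀ x ∈ Icc (0:ℝ) 1, F x = f x := fun x hx => by
    simp [hFdef, IccExtend_of_mem h01 _ hx]; rfl
  have hGeq : ∀ x ∈ Icc (0:ℝ) 1, G x = g x := fun x hx => by
    simp [hGdef, IccExtend_of_mem h01 _ hx]; rfl
  have hFmem : ∀ x, F x ∈ Icc (0:ℝ) 1 := fun x => hfmaps (projIcc 0 1 h01 x).2
  have hGmem : ∀ x, G x ∈ Icc (0:ℝ) 1 := fun x => hgmaps (projIcc 0 1 h01 x).2
  have Fcont : Continuous F := hfcont.restrict.Icc_extend'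
  have Gcont : Continuous G := hgcont.restrict.Icc_extend'
  have mem0 : (0:ℝ) ∈ Icc (0:ℝ) 1 := ⟨le_refl 0, h01⟩
  have mem1 : (1:ℝ) ∈ Icc (0:ℝ) 1 := ⟨h01, le_refl 1⟩
  set b : ℝ := G 1 with hbdef
  have hbg : b = g 1 := hGeq 1 mem1
  have hb0 : 0 < b := by
    rw [hbg, ← hg0]; exact hgmono mem0 mem1 one_pos
  have hbmem : b ∈ Icc (0:ℝ) 1 := by rw [hbg]; exact hgmaps mem1
  set y₁ : ℝ := F b with hy1def
  have hy1f : y₁ = f b := hFeq b hbmem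
  have hy1lt : y₁ < 1 := by
    rw [hy1f, hbg]; exact htunnel 1 ⟨one_pos, le_refl 1⟩
  have hy10 : 0 ≤ y₁ := (hFmem b).1
  -- the three disjoint regions
  set A : Set (ℝ × ℝ) := regionBetween (fun _ => (0:ℝ)) F (Ioo 0 1) with hAdef
  set B : Set (ℝ × ℝ) :=
    Prod.swap ⁻¹' regionBetween (fun _ => (0:ℝ)) G (Ioo 0 1) with hBdef
  set C : Set (ℝ × ℝ) :=
    Prod.swap ⁻¹' regionBetween G (fun _ => b) (Ioo y₁ 1) with hCdef
  have mA : MeasurableSet A :=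
    measurableSet_regionBetween measurable_const Fcont.measurable measurableSet_Ioo
  have mB : MeasurableSet B :=
    (measurableSet_regionBetween measurable_const Gcont.measurable
      measurableSet_Ioo).preimage measurable_swap
  have mC : MeasurableSet C :=
    (measurableSet_regionBetween Gcont.measurable measurable_const
      measurableSet_Ioo).preimage measurable_swap
  have hFint : IntegrableOn F (Ioo (0:ℝ) 1) :=
    (Fcont.integrableOn_Icc).mono_set Ioo_subset_Icc_self
  have hGint : IntegrableOn G (Ioo (0:ℝ) 1) :=
    (Gcont.integrableOn_Icc).mono_set Ioo_subset_Icc_self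
  have hGint' : IntegrableOn G (Ioo y₁ 1) := by
    rcases le_or_gt y₁ 0 with h | h
    · exact ((Gcont.integrableOn_Icc (a := y₁) (b := 1))).mono_set Ioo_subset_Icc_self
    · exact ((Gcont.integrableOn_Icc (a := y₁) (b := 1))).mono_set Ioo_subset_Icc_self
  -- volumes of the regions
  have hA : volume A = ENNReal.ofReal (∫ p in Ioo (0:ℝ) 1, F p) := by
    rw [hAdef, MeasureTheory.Measure.volume_eq_prod,
      volume_regionBetween_eq_integral ((integrableOn_const_iff).2 (Or.inr (by simp)))
        hFint measurableSet_Ioo (fun x hx => (hFmem x).1)]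
    simp
  have hB : volume B = ENNReal.ofReal (∫ q in Ioo (0:ℝ) 1, G q) := by
    rw [hBdef, MeasureTheory.Measure.volume_eq_prod,
      MeasureTheory.Measure.measurePreserving_swap.measure_preimage
        ((measurableSet_regionBetween measurable_const Gcont.measurable
          measurableSet_Ioo).nullMeasurableSet),
      volume_regionBetween_eq_integral ((integrableOn_const_iff).2 (Or.inr (by simp)))
        hGint measurableSet_Ioo (fun x hx => (hGmem x).1)]
    simp
  have hC : volume C = ENNReal.ofReal (∫ q in Ioo y₁ 1, (b - G q)) := by
    rw [hCdef, MeasureTheory.Measure.volume_eq_prod,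
      MeasureTheory.Measure.measurePreserving_swap.measure_preimage
        ((measurableSet_regionBetween Gcont.measurable measurable_const
          measurableSet_Ioo).nullMeasurableSet),
      volume_regionBetween_eq_integral hGint' ((integrableOn_const_iff).2 (Or.inr (by simp)))
        measurableSet_Ioo]
    · rfl
    · intro x hx
      have hx1 : x ∈ Icc (0:ℝ) 1 := ⟨le_trans hy10 hx.1.le, hx.2.le⟩
      rw [hGeq x hx1, hbg]
      exact (hgmono.monotoneOn) hx1 mem1 hx.2.le
  -- disjointness
  have dAB : Disjoint A B := by
    rw [Set.disjoint_left]
    rintro ⟨p, q⟩ ⟨hp, hq⟩ ⟨hq', hp'⟩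
    simp only [Prod.fst, Prod.snd] at *
    have hpI : p ∈ Icc (0:ℝ) 1 := ⟨hp.1.le, hp.2.le⟩
    have hqI : q ∈ Icc (0:ℝ) 1 := ⟨hq'.1.le, hq'.2.le⟩
    have hgq : G q = g q := hGeq q hqI
    have hgqI : g q ∈ Icc (0:ℝ) 1 := hgmaps hqI
    have h1 : f p ≤ f (g q) := hfmono hpI hgqI (by rw [← hgq]; exact hp'.2.le)
    have h2 : f (g q) < q := htunnel q ⟨hq'.1, hq'.2.le⟩
    have h3 : q < f p := by rw [← hFeq p hpI]; exact hq.2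
    linarith
  have dAC : Disjoint A C := by
    rw [Set.disjoint_left]
    rintro ⟨p, q⟩ ⟨hp, hq⟩ ⟨hq', hp'⟩
    simp only [Prod.fst, Prod.snd] at *
    have hpI : p ∈ Icc (0:ℝ) 1 := ⟨hp.1.le, hp.2.le⟩
    have h1 : f p ≤ f b := hfmono hpI hbmem hp'.2.le
    have h3 : q < f p := by rw [← hFeq p hpI]; exact hq.2
    have h4 : y₁ < q := hq'.1
    rw [hy1f] at h4
    linarith
  have dBC : Disjoint B C := by
    rw [Set.disjoint_left]
    rintro ⟨p, q⟩ ⟨hq, hp⟩ ⟨hq', hp'⟩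
    simp only [Prod.fst, Prod.snd] at *
    exact absurd (hp.2.trans hp'.1) (lt_irrefl _)
  -- all contained in the unit square
  have hsub : A ∪ B ∪ C ⊆ Ioo (0:ℝ) 1 ×ˢ Ioo (0:ℝ) 1 := by
    rintro ⟨p, q⟩ ((⟨hp, hq⟩ | ⟨hq, hp⟩) | ⟨hq, hp⟩)
    · exact ⟨hp, hq.1, lt_of_lt_of_le hq.2 (hFmem p).2⟩
    · exact ⟨⟨hp.1, lt_of_lt_of_le hp.2 (hGmem q).2⟩, hq⟩
    · exact ⟨⟨lt_of_le_of_lt (hGmem q).1 hp.1, lt_of_lt_of_le hp.2 hbmem.2⟩,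
        lt_of_le_of_lt hy10 hq.1, hq.2⟩
  -- the total volume bound
  have hsq : volume (Ioo (0:ℝ) 1 ×ˢ Ioo (0:ℝ) 1) = 1 := by
    rw [MeasureTheory.Measure.volume_eq_prod, Measure.prod_prod, Real.volume_Ioo]
    norm_num
  have key : volume A + volume B + volume C ≤ 1 := by
    have h1 : volume (A ∪ B) = volume A + volume B := measure_union dAB mB
    have h2 : volume (A ∪ B ∪ C) = volume (A ∪ B) + volume C :=
      measure_union (Set.disjoint_union_left.mpr ⟨dAC, dBC⟩) mC
    calc volume A + volume B + volume C = volume (A ∪ B ∪ C) := by rw [h2, h1]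
      _ ≤ volume (Ioo (0:ℝ) 1 ×ˢ Ioo (0:ℝ) 1) := measure_mono hsub
      _ = 1 := hsq
  -- translate to real inequalities
  set IF : ℝ := ∫ p in Ioo (0:ℝ) 1, F p with hIF
  set IG : ℝ := ∫ q in Ioo (0:ℝ) 1, G q with hIG
  set ε : ℝ := ∫ q in Ioo y₁ 1, (b - G q) with hε
  have hIFnn : 0 ≤ IF :=
    setIntegral_nonneg measurableSet_Ioo fun x _ => (hFmem x).1
  have hIGnn : 0 ≤ IG :=
    setIntegral_nonneg measurableSet_Ioo fun x _ => (hGmem x).1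
  have hεpos : 0 < ε := by
    have : ε = ∫ q in y₁..1, (b - G q) := by
      rw [hε, intervalIntegral.integral_of_le hy1lt.le,
        MeasureTheory.integral_Ioc_eq_integral_Ioo]
    rw [this]
    refine intervalIntegral_pos_of_pos_on
      ((continuous_const.sub Gcont).intervalIntegrable _ _) ?_ hy1lt
    intro x hx
    have hxI : x ∈ Icc (0:ℝ) 1 := ⟨le_trans hy10 hx.1.le, hx.2.le⟩
    have : G x < b := by
      rw [hGeq x hxI, hbg]; exact hgmono hxI mem1 hx.2
    linarith
  have hsum : IF + IG + ε ≤ 1 := by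
    rw [hA, hB, hC, ← ENNReal.ofReal_add hIFnn hIGnn,
      ← ENNReal.ofReal_add (by linarith) hεpos.le] at key
    exact ENNReal.ofReal_le_one.mp key
  -- conclude
  have hfi : (∫ p in (0:ℝ)..1, f p) = IF := by
    rw [hIF, ← MeasureTheory.integral_Ioc_eq_integral_Ioo,
      ← intervalIntegral.integral_of_le h01]
    exact intervalIntegral.integral_congr fun x hx => by
      rw [uIcc_of_le h01] at hx; exact (hFeq x hx).symm
  have hgi : (∫ x in (0:ℝ)..1, g x) = IG := by
    rw [hIG, ← MeasureTheory.integral_Ioc_eq_integral_Ioo,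
      ← intervalIntegral.integral_of_le h01]
    exact intervalIntegral.integral_congr fun x hx => by
      rw [uIcc_of_le h01] at hx; exact (hGeq x hx).symm
  rw [hfi, hgi]
  linarith
end

section
/- Let k ≥ 1 be an integer, set n = k + 1, and for 0 ≤ g ≤ n set ẽ_g = C(n,g) · min(g, k) (the un-normalized information functions of the (k+1,k) single parity-check code). Then for every p ∈ [0,1], (1/n) Σ_{t=0}^{n-1} p^t (1-p)^{n-1-t} [ (n-t) ẽ_{n-t} - (t+1) ẽ_{n-1-t} ] = 1 - (1-p)^{n-1}. -/
lemma spc_natkey (k t : ℕ) (ht : t ≤ k) :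
    (k + 1 - t) * (Nat.choose (k+1) (k+1-t) * min (k+1-t) k)
      + (if t = 0 then k + 1 else 0)
    = (t + 1) * (Nat.choose (k+1) (k-t) * min (k-t) k)
      + (k + 1) * Nat.choose k t := by
  rcases t with _ | s
  · simp [Nat.choose_succ_self_right, Nat.min_eq_right (Nat.le_succ k)]
  · have hs : s + 1 ≤ k := ht
    have e1 : k + 1 - (s+1) = k - s := by omega
    have e2 : k - (s+1) = k - s - 1 := by omega
    have m1 : min (k - s) k = k - s := by omega
    have m2 : min (k - s - 1) k = k - s - 1 := by omega
    have c1 : Nat.choose (k+1) (k-s) = Nat.choose (k+1) (s+1) := by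
      rw [← Nat.choose_symm (by omega : s + 1 ≤ k + 1)]
      congr 1; omega
    have c2 : Nat.choose (k+1) (k-s-1) = Nat.choose (k+1) (s+2) := by
      rw [← Nat.choose_symm (by omega : s + 2 ≤ k + 1)]
      congr 1; omega
    have h1 : (s+1) * Nat.choose (k+1) (s+1) = (k+1) * Nat.choose k s := by
      have := Nat.add_one_mul_choose_eq k s
      simpa [Nat.succ_eq_add_one, mul_comm] using this.symm
    have h2 : (s+2) * Nat.choose (k+1) (s+2) = (k+1) * Nat.choose k (s+1) := by
      have := Nat.add_one_mul_choose_eq k (s+1)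
      simpa [Nat.succ_eq_add_one, mul_comm] using this.symm
    have h3 : Nat.choose (k+1) (s+1) = Nat.choose k s + Nat.choose k (s+1) :=
      Nat.choose_succ_succ k s
    simp only [e1, e2, m1, m2, c1, c2, if_neg (Nat.succ_ne_zero s)]
    zify [hs, (by omega : 1 ≤ k - s), (by omega : s ≤ k)] at h1 h2 h3 ⊢
    linear_combination (-((k:ℤ) - s)) * h1 - ((k:ℤ) - s - 1) * h2
      + ((k:ℤ) - s) * ((k:ℤ)+1) * h3

/-- For `k ≥ 1` and `n = k + 1`, the average MAP EXIT function of the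
`(k+1,k)` single parity-check code, whose un-normalized information functions
are `ẽ_g = C(n,g) · min(g,k)` for `0 ≤ g ≤ n`, equals `1 - (1-p)^(n-1)` for all
`p ∈ [0,1]`. -/
theorem stmt_8 (k : ℕ) (hk : 1 ≤ k) (n : ℕ) (hn : n = k + 1) (e : ℕ → ℝ)
    (he : ∀ g ≤ n, e g = (Nat.choose n g : ℝ) * ((min g k : ℕ) : ℝ))
    (p : ℝ) (hp : p ∈ Set.Icc (0 : ℝ) 1) :
    (1 / (n : ℝ)) * ∑ t ∈ Finset.range n,
        p ^ t * (1 - p) ^ (n - 1 - t) *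
          (((n - t : ℕ) : ℝ) * e (n - t) - ((t + 1 : ℕ) : ℝ) * e (n - 1 - t))
      = 1 - (1 - p) ^ (n - 1) := by
  subst hn
  simp only [Nat.add_sub_cancel]
  have hterm : ∀ t ∈ Finset.range (k+1),
      p ^ t * (1 - p) ^ (k - t) *
        (((k + 1 - t : ℕ) : ℝ) * e (k + 1 - t) - ((t + 1 : ℕ) : ℝ) * e (k - t))
      = ((k:ℝ)+1) * (p ^ t * (1 - p) ^ (k - t) * (Nat.choose k t : ℝ))
        - (if t = 0 then ((k:ℝ)+1) * (1-p)^k else 0) := by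
    intro t htm
    have ht : t ≤ k := by simpa [Nat.lt_succ_iff] using htm
    rw [he (k+1-t) (by omega), he (k-t) (by omega)]
    have hN := spc_natkey k t ht
    have hR : ((k+1-t:ℕ):ℝ) * ((Nat.choose (k+1) (k+1-t):ℝ) * ((min (k+1-t) k : ℕ):ℝ))
        + (if t = 0 then ((k:ℝ)+1) else 0)
        = ((t+1:ℕ):ℝ) * ((Nat.choose (k+1) (k-t):ℝ) * ((min (k-t) k:ℕ):ℝ))
          + ((k:ℝ)+1) * (Nat.choose k t : ℝ) := by
      have := congrArg (Nat.cast : ℕ → ℝ) hN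
      push_cast at this
      split_ifs with h0 <;> simp [h0] at this ⊢ <;> linarith
    have hX : ((k+1-t:ℕ):ℝ) * ((Nat.choose (k+1) (k+1-t):ℝ) * ((min (k+1-t) k : ℕ):ℝ))
        - ((t+1:ℕ):ℝ) * ((Nat.choose (k+1) (k-t):ℝ) * ((min (k-t) k:ℕ):ℝ))
        = ((k:ℝ)+1) * (Nat.choose k t : ℝ) - (if t = 0 then ((k:ℝ)+1) else 0) := by
      split_ifs at hR ⊢ <;> linarith
    rw [hX]
    by_cases h0 : t = 0
    · subst h0; simp
    · simp only [if_neg h0]; ring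
  rw [Finset.sum_congr rfl hterm, Finset.sum_sub_distrib, ← Finset.mul_sum]
  have hb : ∑ t ∈ Finset.range (k+1), p ^ t * (1 - p) ^ (k - t) * (Nat.choose k t : ℝ) = 1 := by
    have := add_pow p (1-p) k
    simp at this
    linarith [this.symm]
  have hite : ∑ t ∈ Finset.range (k+1), (if t = 0 then ((k:ℝ)+1) * (1-p)^k else 0)
      = ((k:ℝ)+1) * (1-p)^k := by
    rw [Finset.sum_ite_eq' (Finset.range (k+1)) 0 (fun _ => ((k:ℝ)+1) * (1-p)^k)]
    simp
  rw [hb, hite]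
  have hk1 : ((k:ℝ)+1) ≠ 0 := by positivity
  push_cast
  field_simp
end

section
/- Let c ≥ 1 be an integer, let n_1, …, n_c be integers with n_h ≥ 2, and let Λ_1, …, Λ_c be nonnegative reals with Σ_h Λ_h = 1. Set n̄ = Σ_h Λ_h n_h, λ_h = Λ_h n_h / n̄, and R = 1/n̄. Let G > 0, define f_s(q) = 1 - exp(-(G/R) q) and F(q) = Σ_{h=1}^{c} λ_h f_s(q)^{n_h - 1} for q ∈ [0,1], and define the sequence q₀ = 1, q_{i+1} = F(q_i). If q_i → 0 as i → ∞, then G < Ḡ(R), where Ḡ(R) is the unique solution in (0,1) of the equation G = 1 - exp(-G/R). -/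
open Filter

/-- Capacity bound for repetition-based (`k = 1`) coded slotted ALOHA: if the
SIC recursion `q₀ = 1`, `q_{i+1} = Σ_h λ_h (1 - exp(-(G/R) q_i))^(n_h - 1)`
converges to `0`, then `G < Ḡ(R)`, where `Ḡ(R)` is the unique solution in
`(0,1)` of `G = 1 - exp (-G/R)`. -/
theorem stmt_11 (c : ℕ) (hc : 1 ≤ c) (n : Fin c → ℕ) (hn : ∀ h, 2 ≤ n h)
    (Λ : Fin c → ℝ) (hΛ : ∀ h, 0 ≤ Λ h) (hsum : ∑ h, Λ h = 1)
    (nbar R : ℝ) (hnbar : nbar = ∑ h, Λ h * (n h : ℝ)) (hR : R = 1 / nbar)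
    (G : ℝ) (hG : 0 < G)
    (F : ℝ → ℝ)
    (hF : ∀ x, F x = ∑ h, (Λ h * (n h : ℝ) / nbar) *
      (1 - Real.exp (-(G / R) * x)) ^ (n h - 1))
    (q : ℕ → ℝ) (hq0 : q 0 = 1) (hq : ∀ i, q (i + 1) = F (q i))
    (hconv : Tendsto q atTop (nhds 0)) :
    ∀ Gbar ∈ Set.Ioo (0 : ℝ) 1, Gbar = 1 - Real.exp (-Gbar / R) → G < Gbar := by
  intro Gbar hGbar hGbarEq
  obtain ⟨hGbar0, hGbar1⟩ := hGbar
  by_contra hGle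
  push_neg at hGle
  -- basic positivity facts
  have hnbar2 : (2:ℝ) ≤ nbar := by
    have h1 : ∀ h ∈ Finset.univ, Λ h * 2 ≤ Λ h * (n h : ℝ) := by
      intro h _
      have : (2:ℝ) ≤ (n h : ℝ) := by exact_mod_cast hn h
      exact mul_le_mul_of_nonneg_left this (hΛ h)
    calc (2:ℝ) = ∑ h, Λ h * 2 := by rw [← Finset.sum_mul, hsum, one_mul]
      _ ≤ ∑ h, Λ h * (n h : ℝ) := Finset.sum_le_sum h1
      _ = nbar := hnbar.symm
  have hnbar0 : 0 < nbar := by linarith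
  have hR0 : 0 < R := by rw [hR]; positivity
  have hRne : R ≠ 0 := ne_of_gt hR0
  have hGne : G ≠ 0 := ne_of_gt hG
  have ha : 0 < G / R := div_pos hG hR0
  set E := Real.exp (-(G/R)) with hE
  have hE0 : 0 < E := Real.exp_pos _
  have hE1 : E < 1 := Real.exp_lt_one_iff.mpr (by linarith)
  have hp₁0 : (0:ℝ) < 1 - E := by linarith
  have hlam : ∀ h : Fin c, 0 ≤ Λ h * (n h : ℝ) / nbar := fun h =>
    div_nonneg (mul_nonneg (hΛ h) (Nat.cast_nonneg _)) hnbar0.le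
  -- F is monotone on [0, ∞)
  have hmono : ∀ u v : ℝ, 0 ≤ u → u ≤ v → F u ≤ F v := by
    intro u v hu huv
    rw [hF, hF]
    apply Finset.sum_le_sum
    intro h _
    apply mul_le_mul_of_nonneg_left _ (hlam h)
    apply pow_le_pow_left₀
    · have : Real.exp (-(G/R) * u) ≤ 1 := Real.exp_le_one_iff.mpr (by nlinarith)
      linarith
    · have : Real.exp (-(G/R) * v) ≤ Real.exp (-(G/R) * u) :=
        Real.exp_le_exp.mpr (by nlinarith)
      linarith
  -- convergence implies F x < x on (0,1]
  have hFlt : ∀ x : ℝ, 0 < x → x ≤ 1 → F x < x := by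
    intro x hx0 hx1
    by_contra hcon
    push_neg at hcon
    have hub : ∀ i, x ≤ q i := by
      intro i
      induction i with
      | zero => rw [hq0]; exact hx1
      | succ i ih =>
        rw [hq i]
        exact hcon.trans (hmono x (q i) hx0.le ih)
    have : x ≤ 0 := ge_of_tendsto hconv (Filter.Eventually.of_forall hub)
    linarith
  -- pointwise inequality in the p-domain
  have hkey : ∀ p ∈ Set.Ioo (0:ℝ) (1 - E),
      (∑ h, (Λ h * (n h:ℝ)/nbar) * p ^ (n h - 1)) < -(R/G) * Real.log (1 - p) := by
    intro p hp
    obtain ⟨hp0, hpE⟩ := hp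
    have h1p : 0 < 1 - p := by linarith
    have h1p1 : 1 - p < 1 := by linarith
    have hlogneg : Real.log (1 - p) < 0 := Real.log_neg h1p h1p1
    set x := -(R/G) * Real.log (1 - p) with hx
    have hRG0 : 0 < R/G := div_pos hR0 hG
    have hx0 : 0 < x := by rw [hx]; nlinarith
    have hxlog : -(G/R) * x = Real.log (1 - p) := by
      rw [hx]; field_simp
    have hx1 : x ≤ 1 := by
      have hEle : E ≤ 1 - p := by linarith
      have hlogge : -(G/R) ≤ Real.log (1 - p) := by
        calc -(G/R) = Real.log E := by rw [hE, Real.log_exp]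
          _ ≤ Real.log (1 - p) := Real.log_le_log hE0 hEle
      have h2 : -Real.log (1 - p) ≤ G/R := by linarith
      calc x = (R/G) * (-Real.log (1-p)) := by rw [hx]; ring
        _ ≤ (R/G) * (G/R) := mul_le_mul_of_nonneg_left h2 hRG0.le
        _ = 1 := by field_simp
    have hFx := hFlt x hx0 hx1
    rw [hF] at hFx
    have hexp : 1 - Real.exp (-(G/R) * x) = p := by
      rw [hxlog, Real.exp_log h1p]; ring
    rw [hexp] at hFx
    exact hFx
  have huIcc : Set.uIcc (0:ℝ) (1-E) = Set.Icc 0 (1-E) := Set.uIcc_of_le hp₁0.le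
  -- continuity facts
  have hcontψ : ContinuousOn (fun p => -(R/G) * Real.log (1 - p)) (Set.uIcc (0:ℝ) (1-E)) := by
    rw [huIcc]
    apply ContinuousOn.mul continuousOn_const
    apply ContinuousOn.log
    · exact (continuous_const.sub continuous_id).continuousOn
    · intro p hp
      simp only [Set.mem_Icc] at hp
      have : p < 1 := by linarith [hp.2]
      intro hcontra; nlinarith
  have hcontfb : Continuous (fun p : ℝ => ∑ h, (Λ h * (n h:ℝ)/nbar) * p ^ (n h - 1)) :=
    continuous_finset_sum _ (fun h _ => continuous_const.mul (continuous_pow _))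
  have hint1 : IntervalIntegrable (fun p => -(R/G) * Real.log (1 - p))
      MeasureTheory.volume 0 (1-E) := hcontψ.intervalIntegrable
  have hint2 : IntervalIntegrable (fun p : ℝ => ∑ h, (Λ h * (n h:ℝ)/nbar) * p ^ (n h - 1))
      MeasureTheory.volume 0 (1-E) := hcontfb.intervalIntegrable _ _
  have hintg : IntervalIntegrable
      (fun p => (-(R/G) * Real.log (1 - p)) - ∑ h, (Λ h * (n h:ℝ)/nbar) * p ^ (n h - 1))
      MeasureTheory.volume 0 (1-E) := hint1.sub hint2
  -- positive integral
  have hIpos : 0 < ∫ p in (0:ℝ)..(1-E),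
      ((-(R/G) * Real.log (1 - p)) - ∑ h, (Λ h * (n h:ℝ)/nbar) * p ^ (n h - 1)) :=
    intervalIntegral.intervalIntegral_pos_of_pos_on hintg
      (fun p hp => sub_pos.mpr (hkey p hp)) hp₁0
  have hsplit : (∫ p in (0:ℝ)..(1-E),
      ((-(R/G) * Real.log (1 - p)) - ∑ h, (Λ h * (n h:ℝ)/nbar) * p ^ (n h - 1)))
      = (∫ p in (0:ℝ)..(1-E), -(R/G) * Real.log (1 - p))
        - ∫ p in (0:ℝ)..(1-E), ∑ h, (Λ h * (n h:ℝ)/nbar) * p ^ (n h - 1) :=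
    intervalIntegral.integral_sub hint1 hint2
  -- first integral
  have hI1 : (∫ p in (0:ℝ)..(1-E), -(R/G) * Real.log (1 - p)) = (R/G)*(1-E) - E := by
    have hderiv : ∀ p ∈ Set.uIcc (0:ℝ) (1-E),
        HasDerivAt (fun p => (R/G) * ((1-p) * Real.log (1-p) + p))
          (-(R/G) * Real.log (1-p)) p := by
      intro p hp
      rw [huIcc, Set.mem_Icc] at hp
      have h1p : (0:ℝ) < 1 - p := by linarith [hp.2]
      have h1 : HasDerivAt (fun p : ℝ => 1 - p) (-1) p := (hasDerivAt_id p).const_sub 1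
      have h2 : HasDerivAt (fun p : ℝ => Real.log (1 - p)) ((1-p)⁻¹ * (-1)) p :=
        (Real.hasDerivAt_log (ne_of_gt h1p)).comp p h1
      have h3 := (h1.mul h2).add (hasDerivAt_id p)
      have h4 := h3.const_mul (R/G)
      refine h4.congr_deriv ?_
      field_simp
      ring
    rw [intervalIntegral.integral_eq_sub_of_hasDerivAt hderiv hint1]
    have e1 : (1:ℝ) - (1 - E) = E := by ring
    rw [e1, hE, Real.log_exp]
    norm_num [Real.log_one]
    field_simp
    ring
  -- second integral
  have hI2 : (∫ p in (0:ℝ)..(1-E), ∑ h, (Λ h * (n h:ℝ)/nbar) * p ^ (n h - 1))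
      = ∑ h, (Λ h / nbar) * (1-E) ^ (n h) := by
    rw [intervalIntegral.integral_finset_sum]
    · apply Finset.sum_congr rfl
      intro h _
      rw [intervalIntegral.integral_const_mul, integral_pow]
      have hnh1 : (1:ℕ) ≤ n h := le_trans (by norm_num) (hn h)
      have hcast : ((n h - 1 : ℕ) : ℝ) + 1 = (n h : ℝ) := by
        rw [Nat.cast_sub hnh1]; ring
      have hpow : n h - 1 + 1 = n h := Nat.sub_add_cancel hnh1
      rw [hpow, hcast]
      have hz : (0:ℝ) ^ (n h) = 0 := zero_pow (by have := hn h; omega)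
      rw [hz]
      have hnhne : ((n h : ℝ)) ≠ 0 := by
        have : (2:ℝ) ≤ (n h : ℝ) := by exact_mod_cast hn h
        linarith
      field_simp [hnhne, ne_of_gt hnbar0]
      ring
    · intro h _
      exact (Continuous.intervalIntegrable (continuous_const.mul (continuous_pow _)) _ _)
  -- lower bound the second integral (Bernoulli)
  have hsum2 : R - E ≤ ∑ h, (Λ h / nbar) * (1-E) ^ (n h) := by
    have hb : ∀ h ∈ Finset.univ, (Λ h / nbar) * (1 + (n h : ℝ) * (-E)) ≤ (Λ h / nbar) * (1-E) ^ (n h) := by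
      intro h _
      apply mul_le_mul_of_nonneg_left _ (div_nonneg (hΛ h) hnbar0.le)
      have hber := one_add_mul_le_pow (a := -E) (by linarith) (n h)
      calc 1 + (n h:ℝ) * (-E) ≤ (1 + (-E))^(n h) := hber
        _ = (1-E)^(n h) := by ring_nf
    calc R - E = ∑ h, (Λ h / nbar) * (1 + (n h:ℝ) * (-E)) := by
          have hexp2 : ∑ h, (Λ h / nbar) * (1 + (n h:ℝ) * (-E))
              = (∑ h, Λ h)/nbar + (∑ h, Λ h * (n h:ℝ)) * (-E) / nbar := by
            rw [Finset.sum_div, Finset.sum_mul, Finset.sum_div, ← Finset.sum_add_distrib]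
            apply Finset.sum_congr rfl
            intro h _
            field_simp
          rw [hexp2, hsum, ← hnbar, hR]
          field_simp
          ring
      _ ≤ _ := Finset.sum_le_sum hb
  -- combine: (R/G)*(1-E) > R, hence G < 1 - E
  have hgt : R < (R/G) * (1-E) := by
    rw [hsplit, hI1, hI2] at hIpos
    linarith
  have hGlt : G < 1 - E := by
    have h5 : R * G < R * (1 - E) := by
      have := mul_lt_mul_of_pos_right hgt hG
      calc R * G = R * G := rfl
        _ < (R/G) * (1-E) * G := this
        _ = R * (1-E) := by field_simp
    exact (mul_lt_mul_iff_right₀ hR0).mp h5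
  -- convexity: Gbar ≤ G implies 1 - E ≤ G
  have hs0 : 0 < Gbar / G := div_pos hGbar0 hG
  have hs1 : Gbar / G ≤ 1 := (div_le_one hG).mpr hGle
  have hconv2 := convexOn_exp.2 (Set.mem_univ (-(G/R))) (Set.mem_univ (0:ℝ))
    hs0.le (by linarith : (0:ℝ) ≤ 1 - Gbar/G) (by ring)
  simp only [smul_eq_mul, mul_zero, add_zero, Real.exp_zero, mul_one] at hconv2
  have harg : Gbar/G * -(G/R) = -Gbar/R := by field_simp
  rw [harg, ← hE] at hconv2
  have hexpGbar : Real.exp (-Gbar/R) = 1 - Gbar := by linarith [hGbarEq]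
  rw [hexpGbar] at hconv2
  -- hconv2 : 1 - Gbar ≤ Gbar/G * E + (1 - Gbar/G)
  have hsG : (Gbar/G) * G = Gbar := div_mul_cancel₀ Gbar hGne
  have hexp3 : (Gbar/G) * (1 - G - E) = Gbar/G - Gbar/G*G - (Gbar/G) * E := by ring
  rw [hsG] at hexp3
  have h6 : (Gbar/G) * (1 - G - E) ≤ 0 := by rw [hexp3]; linarith [hconv2]
  have h7 : 1 - G - E ≤ 0 := by
    by_contra h7c
    push_neg at h7c
    have := mul_pos hs0 h7c
    linarith
  linarith
end

section
/- Let k ≥ 1 and c ≥ 1 be integers, let n_1, …, n_c be integers with n_h ≥ k + 1, and let Λ_1, …, Λ_c be nonnegative reals with Σ_h Λ_h = 1. Set n̄ = Σ_h Λ_h n_h, λ_h = Λ_h n_h / n̄, and R = k/n̄. Let G > 0, define f_s(q) = 1 - exp(-(G/R) q), f_b^{(h)}(p) = Σ_{l=0}^{k-1} C(n_h - 1, l) (1-p)^l p^{n_h - 1 - l}, and F(q) = Σ_{h=1}^{c} λ_h f_b^{(h)}(f_s(q)) for q ∈ [0,1], and define the sequence q₀ = 1, q_{i+1} = F(q_i).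 If q_i → 0 as i → ∞, then G < Ḡ(R), where Ḡ(R) is the unique solution in (0,1) of the equation G = 1 - exp(-G/R). -/
open Filter
open intervalIntegral

noncomputable def Sfun (m j : ℕ) : ℝ → ℝ :=
  fun p => ∑ l ∈ Finset.range j, (m.choose l : ℝ) * (1 - p) ^ l * p ^ (m - l)

lemma Sfun_continuous (m j : ℕ) : Continuous (Sfun m j) := by
  unfold Sfun; fun_prop

lemma Sfun_term_hasDerivAt (m l : ℕ) (p : ℝ) :
    HasDerivAt (fun p : ℝ => (m.choose l : ℝ) * (1 - p) ^ l * p ^ (m - l))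
      ((m.choose (l+1) : ℝ) * ((l+1 : ℕ) : ℝ) * (1 - p) ^ ((l+1) - 1) * p ^ (m - (l+1))
        - (m.choose l : ℝ) * l * (1 - p) ^ (l - 1) * p ^ (m - l)) p := by
  have h1 : HasDerivAt (fun p : ℝ => (1 - p) ^ l)
      ((l : ℝ) * (1 - p) ^ (l - 1) * (-1)) p := by
    exact HasDerivAt.comp p (hasDerivAt_pow l (1 - p)) ((hasDerivAt_id p).const_sub 1)
  have h2 := hasDerivAt_pow (m - l) p
  have h3 := ((h1.const_mul ((m.choose l : ℝ))).mul h2)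
  convert h3 using 1
  all_goals try rfl
  have hc : ((m.choose (l+1) : ℝ) * ((l+1 : ℕ) : ℝ)) = (m.choose l : ℝ) * ((m - l : ℕ) : ℝ) := by
    exact_mod_cast Nat.choose_succ_right_eq m l
  have he1 : (l+1) - 1 = l := by omega
  have he2 : m - (l+1) = m - l - 1 := by omega
  rw [he1, he2, hc]
  ring

lemma Sfun_hasDerivAt (m j : ℕ) (p : ℝ) :
    HasDerivAt (Sfun m j)
      ((m.choose j : ℝ) * j * (1 - p) ^ (j - 1) * p ^ (m - j)) p := by
  have h := HasDerivAt.fun_sum (u := Finset.range j)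
    (fun l _ => Sfun_term_hasDerivAt m l p)
  have hsum : ∑ l ∈ Finset.range j,
      ((m.choose (l+1) : ℝ) * ((l+1 : ℕ) : ℝ) * (1 - p) ^ ((l+1) - 1) * p ^ (m - (l+1))
        - (m.choose l : ℝ) * l * (1 - p) ^ (l - 1) * p ^ (m - l))
      = (m.choose j : ℝ) * j * (1 - p) ^ (j - 1) * p ^ (m - j) := by
    have := Finset.sum_range_sub
      (f := fun l => (m.choose l : ℝ) * l * (1 - p) ^ (l - 1) * p ^ (m - l)) j
    simp only [Nat.cast_zero, mul_zero, zero_mul, Nat.sub_zero, sub_zero] at this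
    exact this
  rw [hsum] at h
  exact h

lemma Sfun_one (m j : ℕ) (hj : 1 ≤ j) : Sfun m j 1 = 1 := by
  unfold Sfun
  rw [Finset.sum_eq_single 0]
  · simp
  · intro l _ hl
    simp [zero_pow hl]
  · intro h
    exact absurd (Finset.mem_range.mpr hj) h

lemma Sfun_zero (m j : ℕ) (hjm : j ≤ m) : Sfun m j 0 = 0 := by
  unfold Sfun
  apply Finset.sum_eq_zero
  intro l hl
  have : m - l ≠ 0 := by
    have := Finset.mem_range.mp hl; omega
  simp [zero_pow this]

lemma Sfun_monotoneOn (m j : ℕ) : MonotoneOn (Sfun m j) (Set.Icc 0 1) := by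
  apply monotoneOn_of_deriv_nonneg (convex_Icc 0 1) (Sfun_continuous m j).continuousOn
  · exact fun x _ => ((Sfun_hasDerivAt m j x).differentiableAt).differentiableWithinAt
  · intro x hx
    rw [interior_Icc] at hx
    rw [(Sfun_hasDerivAt m j x).deriv]
    have h1 : (0:ℝ) ≤ 1 - x := by linarith [hx.2]
    have h2 : (0:ℝ) ≤ x := le_of_lt hx.1
    exact mul_nonneg (mul_nonneg (mul_nonneg (by positivity) (by positivity))
      (pow_nonneg h1 _)) (pow_nonneg h2 _)

lemma Sfun_nonneg (m j : ℕ) {p : ℝ} (hp : p ∈ Set.Icc (0:ℝ) 1) : 0 ≤ Sfun m j p := by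
  unfold Sfun
  apply Finset.sum_nonneg
  intro l _
  have h1 : (0:ℝ) ≤ 1 - p := by linarith [hp.2]
  have h2 := hp.1
  positivity

lemma Sfun_le_one (m j : ℕ) (hj : 1 ≤ j) (hjm : j ≤ m) {p : ℝ} (hp : p ∈ Set.Icc (0:ℝ) 1) :
    Sfun m j p ≤ 1 := by
  have := Sfun_monotoneOn m j hp (Set.mem_Icc.mpr ⟨zero_le_one, le_refl 1⟩) hp.2
  rwa [Sfun_one m j hj] at this

lemma Sfun_integral (m j : ℕ) (hj : 1 ≤ j) (hjm : j ≤ m) :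
    ∫ p in (0:ℝ)..1, (m.choose j : ℝ) * j * (1 - p) ^ (j - 1) * p ^ (m - j) = 1 := by
  have h := intervalIntegral.integral_eq_sub_of_hasDerivAt
    (f := Sfun m j)
    (f' := fun p => (m.choose j : ℝ) * j * (1 - p) ^ (j - 1) * p ^ (m - j))
    (a := (0:ℝ)) (b := 1)
    (fun p _ => Sfun_hasDerivAt m j p)
    (by apply Continuous.intervalIntegrable; fun_prop)
  rw [h, Sfun_one m j hj, Sfun_zero m j hjm]
  norm_num

lemma beta_integral (m l : ℕ) (hl : l ≤ m) :
    ∫ p in (0:ℝ)..1, (m.choose l : ℝ) * (1 - p) ^ l * p ^ (m - l) = 1 / ((m:ℝ) + 1) := by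
  have h := Sfun_integral (m+1) (l+1) (by omega) (by omega)
  have hc : ((m+1).choose (l+1) : ℝ) * ((l:ℝ)+1) = ((m:ℝ)+1) * (m.choose l : ℝ) := by
    exact_mod_cast (Nat.add_one_mul_choose_eq m l).symm
  have h2 : ∀ p : ℝ, ((m+1).choose (l+1) : ℝ) * ((l:ℝ)+1) * (1 - p) ^ ((l+1) - 1) * p ^ ((m+1) - (l+1))
      = ((m:ℝ)+1) * ((m.choose l : ℝ) * (1 - p) ^ l * p ^ (m - l)) := by
    intro p
    have e1 : (l+1) - 1 = l := by omega
    have e2 : (m+1) - (l+1) = m - l := by omega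
    rw [e1, e2, hc]; ring
  have h3 : ∫ (p : ℝ) in (0:ℝ)..1,
      ((m:ℝ)+1) * ((m.choose l : ℝ) * (1 - p) ^ l * p ^ (m - l)) = 1 := by
    have hcg : (∫ (p : ℝ) in (0:ℝ)..1, ((m:ℝ)+1) * ((m.choose l : ℝ) * (1 - p) ^ l * p ^ (m - l)))
        = ∫ (p : ℝ) in (0:ℝ)..1,
          ((m+1).choose (l+1) : ℝ) * ((l+1 : ℕ) : ℝ) * (1 - p) ^ ((l+1) - 1) * p ^ ((m+1) - (l+1)) := by
      apply intervalIntegral.integral_congr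
      intro p _
      show (↑m + 1) * (↑(m.choose l) * (1 - p) ^ l * p ^ (m - l)) = _
      rw [← h2 p]
      push_cast
      ring
    calc _ = _ := hcg
    _ = 1 := by exact_mod_cast h
  rw [intervalIntegral.integral_const_mul] at h3
  have hm : ((m:ℝ)+1) ≠ 0 := by positivity
  field_simp at h3 ⊢
  linarith

lemma Sfun_integral_self (m j : ℕ) (hjm : j ≤ m) :
    ∫ p in (0:ℝ)..1, Sfun m j p = (j : ℝ) / ((m:ℝ) + 1) := by
  unfold Sfun
  rw [intervalIntegral.integral_finset_sum]
  · rw [Finset.sum_congr rfl (fun l hl => beta_integral m l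
      (le_trans (Nat.le_of_lt_succ (Nat.lt_succ_of_lt (Finset.mem_range.mp hl))) hjm))]
    simp [Finset.sum_const]
    ring
  · intro l _
    apply Continuous.intervalIntegrable
    fun_prop

lemma log_int (P : ℝ) (hP0 : 0 < P) (hP1 : P < 1) :
    ∫ p in (0:ℝ)..P, Real.log (1 - p) = -((1-P) * Real.log (1-P)) - P := by
  have h := intervalIntegral.integral_comp_sub_left (a := (0:ℝ)) (b := P)
    (fun x => Real.log x) 1
  simp only [sub_zero] at h
  rw [h, integral_log]
  simp

/-- Capacity bound for MDS-based coded slotted ALOHA: if the SIC recursion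
`q₀ = 1`, `q_{i+1} = Σ_h λ_h f_b^{(h)} (f_s (q_i))`, with
`f_s(x) = 1 - exp(-(G/R) x)` and
`f_b^{(h)}(p) = Σ_{l<k} C(n_h-1,l) (1-p)^l p^(n_h-1-l)`, converges to `0`,
then `G < Ḡ(R)`, where `Ḡ(R)` is the unique solution in `(0,1)` of
`G = 1 - exp (-G/R)`. -/
theorem stmt_12 (k : ℕ) (hk : 1 ≤ k) (c : ℕ) (hc : 1 ≤ c)
    (n : Fin c → ℕ) (hn : ∀ h, k + 1 ≤ n h)
    (Λ : Fin c → ℝ) (hΛ : ∀ h, 0 ≤ Λ h) (hsum : ∑ h, Λ h = 1)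
    (nbar R : ℝ) (hnbar : nbar = ∑ h, Λ h * (n h : ℝ)) (hR : R = (k : ℝ) / nbar)
    (G : ℝ) (hG : 0 < G)
    (fs : ℝ → ℝ) (hfs : ∀ x, fs x = 1 - Real.exp (-(G / R) * x))
    (fb : Fin c → ℝ → ℝ)
    (hfb : ∀ h p, fb h p = ∑ l ∈ Finset.range k,
      (Nat.choose (n h - 1) l : ℝ) * (1 - p) ^ l * p ^ (n h - 1 - l))
    (F : ℝ → ℝ) (hF : ∀ x, F x = ∑ h, (Λ h * (n h : ℝ) / nbar) * fb h (fs x))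
    (q : ℕ → ℝ) (hq0 : q 0 = 1) (hq : ∀ i, q (i + 1) = F (q i))
    (hconv : Tendsto q atTop (nhds 0)) :
    ∀ Gbar ∈ Set.Ioo (0 : ℝ) 1, Gbar = 1 - Real.exp (-Gbar / R) → G < Gbar := by
  -- basic positivity facts
  have hnk : ∀ h, ((k:ℝ) + 1) ≤ (n h : ℝ) := fun h => by exact_mod_cast hn h
  have hk0 : (0:ℝ) < k := by exact_mod_cast hk
  have hnbar1 : (1:ℝ) ≤ nbar := by
    rw [hnbar, ← hsum]
    apply Finset.sum_le_sum
    intro h _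
    nlinarith [hΛ h, hnk h, hk0]
  have hnbar0 : (0:ℝ) < nbar := lt_of_lt_of_le one_pos hnbar1
  have hR0 : 0 < R := by rw [hR]; positivity
  have hGR : 0 < G / R := div_pos hG hR0
  -- rewrite fb as Sfun
  have hfbS : ∀ h, fb h = Sfun (n h - 1) k := by
    intro h; funext p; rw [hfb]; rfl
  have hkn : ∀ h, k ≤ n h - 1 := fun h => by have := hn h; omega
  -- fs facts
  have hfs_nonneg : ∀ x, 0 ≤ x → 0 ≤ fs x := by
    intro x hx; rw [hfs]
    have : Real.exp (-(G/R) * x) ≤ 1 := Real.exp_le_one_iff.mpr (by nlinarith)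
    linarith
  have hfs_le_one : ∀ x, fs x ≤ 1 := by
    intro x; rw [hfs]; have := Real.exp_pos (-(G/R) * x); linarith
  have hfs_mono : ∀ a b, a ≤ b → fs a ≤ fs b := by
    intro a b hab; rw [hfs, hfs]
    have : Real.exp (-(G/R) * b) ≤ Real.exp (-(G/R) * a) :=
      Real.exp_le_exp.mpr (by nlinarith)
    linarith
  have hfs_strict : ∀ a b, a < b → fs a < fs b := by
    intro a b hab; rw [hfs, hfs]
    have : Real.exp (-(G/R) * b) < Real.exp (-(G/R) * a) :=
      Real.exp_lt_exp.mpr (by nlinarith)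
    linarith
  -- weights
  have hw0 : ∀ h : Fin c, 0 ≤ Λ h * (n h : ℝ) / nbar := by
    intro h
    have := hΛ h
    have h2 : (0:ℝ) ≤ (n h : ℝ) := Nat.cast_nonneg _
    positivity
  have hwsum : ∑ h, Λ h * (n h : ℝ) / nbar = 1 := by
    rw [← Finset.sum_div, ← hnbar, div_self (ne_of_gt hnbar0)]
  -- monotonicity of F on [0, ∞)
  have hFmono : ∀ a b, 0 ≤ a → a ≤ b → F a ≤ F b := by
    intro a b ha hab
    rw [hF, hF]
    apply Finset.sum_le_sum
    intro h _
    apply mul_le_mul_of_nonneg_left _ (hw0 h)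
    rw [hfbS]
    exact Sfun_monotoneOn _ _ ⟨hfs_nonneg a ha, hfs_le_one a⟩
      ⟨hfs_nonneg b (le_trans ha hab), hfs_le_one b⟩ (hfs_mono a b hab)
  -- key: F x < x on (0, 1]
  have hkey : ∀ x, 0 < x → x ≤ 1 → F x < x := by
    intro x hx0 hx1
    by_contra hcon
    push_neg at hcon
    have hub : ∀ i, x ≤ q i := by
      intro i
      induction i with
      | zero => rw [hq0]; exact hx1
      | succ i ih =>
          rw [hq]
          exact le_trans hcon (hFmono x (q i) (le_of_lt hx0) ih)
    have := ge_of_tendsto hconv (Eventually.of_forall hub)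
    linarith
  -- the crossing point P
  set P : ℝ := 1 - Real.exp (-(G/R)) with hPdef
  have hP0 : 0 < P := by
    have : Real.exp (-(G/R)) < 1 := Real.exp_lt_one_iff.mpr (by linarith)
    simp only [hPdef]; linarith
  have hP1 : P < 1 := by
    have := Real.exp_pos (-(G/R)); simp only [hPdef]; linarith
  have hfs1 : fs 1 = P := by rw [hfs]; simp [hPdef]
  -- Fbar
  set Fbar : ℝ → ℝ := fun p => ∑ h, (Λ h * (n h : ℝ) / nbar) * Sfun (n h - 1) k p
    with hFbardef
  have hFeq : ∀ x, F x = Fbar (fs x) := by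
    intro x; rw [hF]; simp only [hFbardef]
    exact Finset.sum_congr rfl fun h _ => by rw [hfbS]
  have hFbar_cont : Continuous Fbar := by
    apply continuous_finset_sum
    intro h _
    exact continuous_const.mul (Sfun_continuous _ _)
  -- pointwise bound on (0, P]
  have hFbarlt : ∀ p ∈ Set.Ioc (0:ℝ) P, Fbar p < -(R/G) * Real.log (1-p) := by
    intro p hp
    have h1p : 0 < 1 - p := by linarith [hp.2, hP1]
    have hlogneg : Real.log (1-p) < 0 := Real.log_neg h1p (by linarith [hp.1])
    set x : ℝ := -(R/G) * Real.log (1-p) with hxdef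
    have hx0 : 0 < x := by
      rw [hxdef]
      have hRG : 0 < R / G := div_pos hR0 hG
      nlinarith
    have hfsx : fs x = p := by
      rw [hfs, hxdef]
      have : -(G/R) * (-(R/G) * Real.log (1-p)) = Real.log (1-p) := by
        field_simp
      rw [this, Real.exp_log h1p]
      ring
    have hx1 : x ≤ 1 := by
      by_contra hcc
      push_neg at hcc
      have := hfs_strict 1 x hcc
      rw [hfsx, hfs1] at this
      linarith [hp.2]
    have := hkey x hx0 hx1
    rw [hFeq, hfsx] at this
    linarith
  -- integral of Fbar over [0,1] is R
  have hInt1 : ∫ p in (0:ℝ)..1, Fbar p = R := by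
    simp only [hFbardef]
    rw [intervalIntegral.integral_finset_sum]
    · have heach : ∀ h : Fin c,
          (∫ p in (0:ℝ)..1, (Λ h * (n h : ℝ) / nbar) * Sfun (n h - 1) k p)
            = Λ h * (k : ℝ) / nbar := by
        intro h
        rw [intervalIntegral.integral_const_mul, Sfun_integral_self _ _ (hkn h)]
        have hcast : ((n h - 1 : ℕ) : ℝ) + 1 = (n h : ℝ) := by
          have := hn h
          have : 1 ≤ n h := by omega
          push_cast [Nat.cast_sub this]
          ring
        rw [hcast]
        have hnh0 : (0:ℝ) < (n h : ℝ) := by nlinarith [hnk h]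
        field_simp
      rw [Finset.sum_congr rfl fun h _ => heach h, hR,
        ← Finset.sum_div, ← Finset.sum_mul, hsum, one_mul]
    · intro h _
      exact (continuous_const.mul (Sfun_continuous _ _)).intervalIntegrable _ _
  -- Fbar ≤ 1 on [0,1]
  have hFbar_le_one : ∀ p ∈ Set.Icc (0:ℝ) 1, Fbar p ≤ 1 := by
    intro p hp
    simp only [hFbardef]
    calc ∑ h, (Λ h * (n h : ℝ) / nbar) * Sfun (n h - 1) k p
        ≤ ∑ h, (Λ h * (n h : ℝ) / nbar) * 1 := by
          apply Finset.sum_le_sum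
          intro h _
          exact mul_le_mul_of_nonneg_left
            (Sfun_le_one _ _ hk (hkn h) hp) (hw0 h)
      _ = 1 := by simp only [mul_one]; exact hwsum
  -- split the integral
  have hIntegrable1 : IntervalIntegrable Fbar MeasureTheory.volume 0 P :=
    hFbar_cont.intervalIntegrable _ _
  have hIntegrable2 : IntervalIntegrable Fbar MeasureTheory.volume P 1 :=
    hFbar_cont.intervalIntegrable _ _
  have hsplit : (∫ p in (0:ℝ)..P, Fbar p) + (∫ p in P..1, Fbar p) = R := by
    rw [intervalIntegral.integral_add_adjacent_intervals hIntegrable1 hIntegrable2, hInt1]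
  -- bound on [P,1]
  have hI2 : (∫ p in P..1, Fbar p) ≤ 1 - P := by
    have hmono := intervalIntegral.integral_mono_on (le_of_lt hP1) hIntegrable2
      (_root_.intervalIntegrable_const (c := (1:ℝ)))
      (fun p hp => hFbar_le_one p ⟨le_trans (le_of_lt hP0) hp.1, hp.2⟩)
    rw [intervalIntegral.integral_const, smul_eq_mul, mul_one] at hmono
    exact hmono
  -- strict bound on [0,P]
  have hlogcont : ContinuousOn (fun p : ℝ => -(R/G) * Real.log (1-p)) (Set.Icc 0 P) := by
    apply ContinuousOn.mul continuousOn_const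
    apply ContinuousOn.comp Real.continuousOn_log
      ((continuous_const.sub continuous_id).continuousOn)
    intro p hp
    have : 0 < 1 - p := by linarith [hp.2, hP1]
    exact Set.mem_compl_singleton_iff.mpr (ne_of_gt this)
  have hI3 : (∫ p in (0:ℝ)..P, Fbar p) < ∫ p in (0:ℝ)..P, -(R/G) * Real.log (1-p) := by
    apply intervalIntegral.integral_lt_integral_of_continuousOn_of_le_of_exists_lt hP0
      hFbar_cont.continuousOn hlogcont
      (fun p hp => le_of_lt (hFbarlt p hp))
      ⟨P, ⟨le_of_lt hP0, le_refl P⟩, hFbarlt P ⟨hP0, le_refl P⟩⟩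
  -- compute the log integral
  have hI4 : (∫ p in (0:ℝ)..P, -(R/G) * Real.log (1-p)) = (R/G) * P - Real.exp (-(G/R)) := by
    rw [intervalIntegral.integral_const_mul, log_int P hP0 hP1]
    have h1P : (1:ℝ) - P = Real.exp (-(G/R)) := by simp [hPdef]
    rw [h1P, Real.log_exp]
    field_simp
    ring
  -- conclude G < P
  have hGP : G < P := by
    have hchain : R < (R/G) * P := by
      have h1P : (1:ℝ) - P = Real.exp (-(G/R)) := by simp [hPdef]
      calc R = (∫ p in (0:ℝ)..P, Fbar p) + (∫ p in P..1, Fbar p) := hsplit.symm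
        _ < ((R/G) * P - Real.exp (-(G/R))) + (1 - P) := by
            rw [← hI4]; exact add_lt_add_of_lt_of_le hI3 hI2
        _ = (R/G) * P := by rw [h1P]; ring
    have h2 : R * G < (R/G) * P * G := mul_lt_mul_of_pos_right hchain hG
    have h3 : (R/G) * P * G = R * P := by field_simp
    rw [h3] at h2
    exact lt_of_mul_lt_mul_left (by linarith [h2]) (le_of_lt hR0)
  -- final step via concavity
  intro Gbar hGbarIoo heq
  by_contra hcon
  push_neg at hcon
  rcases eq_or_lt_of_le hcon with heqG | hlt
  · rw [heqG, neg_div] at heq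
    simp only [hPdef] at hGP
    linarith
  · have ht0 : 0 < Gbar / G := div_pos hGbarIoo.1 hG
    have ht1 : Gbar / G < 1 := (div_lt_one hG).mpr hlt
    set t : ℝ := Gbar / G with htdef
    have htG : t * G = Gbar := div_mul_cancel₀ Gbar (ne_of_gt hG)
    have hconv2 := convexOn_exp.2 (Set.mem_univ (-(G/R))) (Set.mem_univ (0:ℝ))
      (le_of_lt ht0) (by linarith : (0:ℝ) ≤ 1 - t) (by ring)
    simp only [smul_eq_mul, mul_zero, add_zero, Real.exp_zero, mul_one] at hconv2
    have harg : t * -(G/R) = -(Gbar/R) := by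
      rw [← htG]; field_simp
    rw [harg] at hconv2
    have hexpGbar : Real.exp (-(Gbar/R)) = 1 - Gbar := by
      rw [neg_div] at heq; linarith [heq]
    rw [hexpGbar] at hconv2
    -- hconv2 : 1 - Gbar ≤ t * exp(-(G/R)) + (1 - t)
    -- hGP : G < 1 - exp(-(G/R))
    simp only [hPdef] at hGP
    have h5 : t * G < t * (1 - Real.exp (-(G/R))) := mul_lt_mul_of_pos_left hGP ht0
    rw [htG] at h5
    have h6 : t * (1 - Real.exp (-(G/R))) = t - t * Real.exp (-(G/R)) := by ring
    rw [h6] at h5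
    linarith
end

section
/- Let c ≥ 1 be an integer, let n_1, …, n_c be integers with n_h ≥ 2, and let Λ_1, …, Λ_c be nonnegative reals with Σ_h Λ_h = 1. Set n̄ = Σ_h Λ_h n_h, λ_h = Λ_h n_h / n̄, and R = 1/n̄. For G > 0 define F_G(q) = Σ_h λ_h (1 - exp(-(G/R) q))^{n_h - 1} and the sequence q₀(G) = 1, q_{i+1}(G) = F_G(q_i(G)). Define the capacity G* = sup { G > 0 : q_i(G) → 0 as i → ∞ } (with G* = 0 if the set is empty). Then G* ≤ Ḡ(R), where Ḡ(R) is the unique solution in (0,1) of G = 1 - exp(-G/R). -/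
open Filter

/-- The capacity `G* = sup {G > 0 : the SIC recursion started at 1 converges
to 0}` of the repetition-based (`k = 1`) coded slotted ALOHA scheme is upper
bounded by `Ḡ(R)`, the unique solution in `(0,1)` of `G = 1 - exp (-G/R)`
(with `sSup ∅ = 0` by convention in `ℝ`). -/
theorem stmt_13 (c : ℕ) (hc : 1 ≤ c) (n : Fin c → ℕ) (hn : ∀ h, 2 ≤ n h)
    (Λ : Fin c → ℝ) (hΛ : ∀ h, 0 ≤ Λ h) (hsum : ∑ h, Λ h = 1)
    (nbar R : ℝ) (hnbar : nbar = ∑ h, Λ h * (n h : ℝ)) (hR : R = 1 / nbar) :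
    ∀ Gbar ∈ Set.Ioo (0 : ℝ) 1, Gbar = 1 - Real.exp (-Gbar / R) →
      sSup {G : ℝ | 0 < G ∧
        Tendsto
          (fun i : ℕ =>
            (fun x : ℝ => ∑ h, (Λ h * (n h : ℝ) / nbar) *
              (1 - Real.exp (-(G / R) * x)) ^ (n h - 1))^[i] 1)
          atTop (nhds 0)} ≤ Gbar := by
  intro Gbar hGbarIoo hfix
  obtain ⟨hGbar0, hGbar1⟩ := hGbarIoo
  have hnbar2 : (2:ℝ) ≤ nbar := by
    rw [hnbar]
    calc (2:ℝ) = ∑ h, Λ h * 2 := by rw [← Finset.sum_mul, hsum, one_mul]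
    _ ≤ ∑ h, Λ h * (n h : ℝ) := Finset.sum_le_sum fun h _ =>
        mul_le_mul_of_nonneg_left (by exact_mod_cast hn h) (hΛ h)
  have hnbar0 : (0:ℝ) < nbar := by linarith
  apply Real.sSup_le _ hGbar0.le
  rintro G ⟨hG, htend⟩
  set s := G / R with hsdef
  have hs : s = G * nbar := by rw [hsdef, hR]; field_simp
  have hspos : 0 < s := by rw [hs]; positivity
  set F : ℝ → ℝ := fun x : ℝ => ∑ h, (Λ h * (n h : ℝ) / nbar) *
      (1 - Real.exp (-s * x)) ^ (n h - 1) with hFdef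
  have hcoef : ∀ h : Fin c, (0:ℝ) ≤ Λ h * (n h : ℝ) / nbar := fun h => by
    have := hΛ h; positivity
  have hcoefsum : ∑ h, Λ h * (n h : ℝ) / nbar = 1 := by
    rw [← Finset.sum_div, ← hnbar, div_self hnbar0.ne']
  -- F q ≤ q on [0,1]
  have hFle : ∀ q ∈ Set.Icc (0:ℝ) 1, F q ≤ q := by
    intro q hq
    rcases eq_or_lt_of_le hq.1 with h0 | h0
    · have hF0 : F 0 = 0 := by
        rw [hFdef]
        apply Finset.sum_eq_zero
        intro h _
        rw [mul_zero, Real.exp_zero, sub_self, zero_pow (by have := hn h; omega), mul_zero]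
      rw [← h0, hF0]
    · by_contra hlt
      push_neg at hlt
      have hmono : ∀ a b : ℝ, 0 ≤ a → a ≤ b → F a ≤ F b := by
        intro a b ha hab
        rw [hFdef]
        apply Finset.sum_le_sum
        intro h _
        refine mul_le_mul_of_nonneg_left (pow_le_pow_left₀ ?_ ?_ _) (hcoef h)
        · have : Real.exp (-s * a) ≤ 1 := by
            rw [show (1:ℝ) = Real.exp 0 by simp]
            exact Real.exp_le_exp.2 (by nlinarith)
          linarith
        · have : Real.exp (-s * b) ≤ Real.exp (-s * a) :=
            Real.exp_le_exp.2 (by nlinarith)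
          linarith
      have hiter : ∀ i, q ≤ F^[i] 1 := by
        intro i
        induction i with
        | zero => simpa using hq.2
        | succ i ih =>
          rw [Function.iterate_succ_apply']
          exact le_trans hlt.le (hmono q (F^[i] 1) h0.le ih)
      have : q ≤ 0 := ge_of_tendsto htend (Filter.Eventually.of_forall hiter)
      linarith
  -- the potential function
  set Φ : ℝ → ℝ := fun x => (∑ h, (Λ h / nbar) * (1 - Real.exp (-s * x)) ^ (n h))
      + x * Real.exp (-s * x) + Real.exp (-s * x) / s with hΦdef
  have hΦ : ∀ x : ℝ, HasDerivAt Φ (s * Real.exp (-s * x) * (F x - x)) x := by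
    intro x
    have hE : HasDerivAt (fun y : ℝ => Real.exp (-s * y)) (Real.exp (-s * x) * (-s)) x := by
      have h0 : HasDerivAt (fun y : ℝ => -s * y) (-s) x := by
        simpa using (hasDerivAt_id x).const_mul (-s)
      exact h0.exp
    have hB : HasDerivAt (fun y : ℝ => 1 - Real.exp (-s * y)) (-(Real.exp (-s * x) * (-s))) x := by
      have := (hasDerivAt_const x (1:ℝ)).fun_sub hE
      convert this using 1
      all_goals first | rfl | ring
    have hterm : ∀ h : Fin c, HasDerivAt (fun y : ℝ => (Λ h / nbar) * (1 - Real.exp (-s * y)) ^ (n h))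
        ((Λ h / nbar) * ((n h : ℝ) * (1 - Real.exp (-s * x)) ^ (n h - 1) * (-(Real.exp (-s * x) * (-s))))) x :=
      fun h => (hB.pow (n h)).const_mul (Λ h / nbar)
    have hsum' : HasDerivAt (fun y : ℝ => ∑ h, (Λ h / nbar) * (1 - Real.exp (-s * y)) ^ (n h))
        (∑ h, (Λ h / nbar) * ((n h : ℝ) * (1 - Real.exp (-s * x)) ^ (n h - 1) * (-(Real.exp (-s * x) * (-s))))) x :=
      HasDerivAt.fun_sum fun h _ => hterm h
    have h2 : HasDerivAt (fun y : ℝ => y * Real.exp (-s * y))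
        (1 * Real.exp (-s * x) + x * (Real.exp (-s * x) * (-s))) x :=
      (hasDerivAt_id x).mul hE
    have h3 : HasDerivAt (fun y : ℝ => Real.exp (-s * y) / s)
        ((Real.exp (-s * x) * (-s)) / s) x := hE.div_const s
    have hraw := (hsum'.add h2).add h3
    have heq : (∑ h, (Λ h / nbar) * ((n h : ℝ) * (1 - Real.exp (-s * x)) ^ (n h - 1) * (-(Real.exp (-s * x) * (-s)))))
        + (1 * Real.exp (-s * x) + x * (Real.exp (-s * x) * (-s)))
        + (Real.exp (-s * x) * (-s)) / s = s * Real.exp (-s * x) * (F x - x) := by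
      have e1 : ∑ h, (Λ h / nbar) * ((n h : ℝ) * (1 - Real.exp (-s * x)) ^ (n h - 1) * (-(Real.exp (-s * x) * (-s))))
          = s * Real.exp (-s * x) * F x := by
        rw [hFdef, Finset.mul_sum]
        exact Finset.sum_congr rfl fun h _ => by ring
      have e2 : Real.exp (-s * x) * (-s) / s = -Real.exp (-s * x) := by
        field_simp
      rw [e1, e2]
      ring
    exact heq ▸ hraw
  have hFcont : Continuous F := by
    rw [hFdef]; fun_prop
  have hcont : Continuous (fun x : ℝ => s * Real.exp (-s * x) * (F x - x)) := by
    fun_prop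
  have hFTC : ∫ x in (0:ℝ)..1, s * Real.exp (-s * x) * (F x - x) = Φ 1 - Φ 0 :=
    intervalIntegral.integral_eq_sub_of_hasDerivAt (fun x _ => hΦ x)
      (hcont.intervalIntegrable 0 1)
  have hint_nonpos : ∫ x in (0:ℝ)..1, s * Real.exp (-s * x) * (F x - x) ≤ 0 := by
    have h0 : (0:ℝ) ≤ ∫ x in (0:ℝ)..1, -(s * Real.exp (-s * x) * (F x - x)) := by
      apply intervalIntegral.integral_nonneg zero_le_one
      intro u hu
      have h1 : (0:ℝ) ≤ s * Real.exp (-s * u) := by positivity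
      have h2 : F u - u ≤ 0 := sub_nonpos.2 (hFle u hu)
      nlinarith
    rw [intervalIntegral.integral_neg] at h0
    linarith
  have hΦle : Φ 1 ≤ Φ 0 := by
    rw [hFTC] at hint_nonpos; linarith
  have hΦ0 : Φ 0 = 1 / s := by
    simp only [hΦdef]
    have hz : ∑ h, (Λ h / nbar) * (1 - Real.exp (-s * 0)) ^ (n h) = 0 :=
      Finset.sum_eq_zero fun h _ => by
        rw [mul_zero, Real.exp_zero, sub_self, zero_pow (by have := hn h; omega), mul_zero]
    rw [hz]
    norm_num
  have hΦ1 : Φ 1 = (∑ h, (Λ h / nbar) * (1 - Real.exp (-s)) ^ (n h))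
      + Real.exp (-s) + Real.exp (-s) / s := by
    rw [hΦdef]; simp [mul_one]
  -- Bernoulli
  have hE1 : Real.exp (-s) ≤ 1 := Real.exp_le_one_iff.2 (by linarith)
  have hE0 : (0:ℝ) < Real.exp (-s) := Real.exp_pos _
  have hbern : ∀ h : Fin c, 1 - (n h : ℝ) * Real.exp (-s) ≤ (1 - Real.exp (-s)) ^ (n h) := by
    intro h
    have h2 : (-2:ℝ) ≤ -Real.exp (-s) := by linarith
    have := one_add_mul_le_pow h2 (n h)
    simpa [sub_eq_add_neg, mul_neg] using this
  have hsum_bern : ∑ h, (Λ h / nbar) * (1 - (n h : ℝ) * Real.exp (-s))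
      ≤ ∑ h, (Λ h / nbar) * (1 - Real.exp (-s)) ^ (n h) :=
    Finset.sum_le_sum fun h _ => mul_le_mul_of_nonneg_left (hbern h)
      (div_nonneg (hΛ h) hnbar0.le)
  have hL : ∑ h, (Λ h / nbar) * (1 - (n h : ℝ) * Real.exp (-s)) = 1 / nbar - Real.exp (-s) := by
    have e1 : ∀ h : Fin c, (Λ h / nbar) * (1 - (n h : ℝ) * Real.exp (-s))
        = Λ h / nbar - (Λ h * (n h : ℝ) / nbar) * Real.exp (-s) := fun h => by ring
    rw [Finset.sum_congr rfl fun h _ => e1 h, Finset.sum_sub_distrib]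
    have e2 : ∑ h, Λ h / nbar = 1 / nbar := by rw [← Finset.sum_div, hsum]
    have e3 : ∑ h, (Λ h * (n h : ℝ) / nbar) * Real.exp (-s) = Real.exp (-s) := by
      rw [← Finset.sum_mul, hcoefsum, one_mul]
    rw [e2, e3]
  have hkey : 1 / nbar + Real.exp (-s) / s ≤ 1 / s := by
    rw [hΦ1, hΦ0] at hΦle
    linarith [hsum_bern, hL ▸ hsum_bern]
  have hGle : G + Real.exp (-s) ≤ 1 := by
    have h5 : s * (1 / nbar + Real.exp (-s) / s) ≤ s * (1 / s) :=
      mul_le_mul_of_nonneg_left hkey hspos.le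
    have e4 : s * (1 / nbar) = G := by rw [hs]; field_simp
    have e5 : s * (Real.exp (-s) / s) = Real.exp (-s) := by field_simp
    have e6 : s * (1 / s) = 1 := by field_simp
    rw [mul_add, e4, e5, e6] at h5
    exact h5
  -- conclude via strict convexity of exp
  by_contra hGG
  push_neg at hGG
  set t := Gbar / G with htdef
  have ht0 : 0 < t := div_pos hGbar0 hG
  have ht1 : t < 1 := (div_lt_one hG).2 hGG
  have htG : t * G = Gbar := by rw [htdef]; field_simp
  have hne : (0:ℝ) ≠ -s := by intro hh; linarith
  have hconv := strictConvexOn_exp.2 (Set.mem_univ (0:ℝ)) (Set.mem_univ (-s)) hne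
    (by linarith : (0:ℝ) < 1 - t) ht0 (by ring)
  simp only [smul_eq_mul, mul_zero, zero_add, Real.exp_zero, mul_one] at hconv
  have hts : t * (-s) = -(Gbar * nbar) := by
    rw [hs, htdef]; field_simp
  rw [hts] at hconv
  have hfix' : Gbar = 1 - Real.exp (-(Gbar * nbar)) := by
    have e7 : -Gbar / R = -(Gbar * nbar) := by rw [hR]; field_simp
    nth_rewrite 1 [hfix]
    rw [e7]
  have hmul : t * G ≤ t * (1 - Real.exp (-s)) :=
    mul_le_mul_of_nonneg_left (by linarith) ht0.le
  nlinarith [hconv, hfix', hmul, htG]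
end
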